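/- Let X be a compact Hausdorff space, L an absolute neighborhood extensor for compact Hausdorff spaces, A ⊆ X closed, Y = ⋃_{n≥1} Y_n with each Y_n closed in X, and assume L is an absolute extensor for each Y_n (every continuous map from a closed subset of Y_n into L extends over Y_n). Then every continuous map f : A → L extends continuously over some open neighborhood of A ∪ Y in X. -/

import Mathlib

open Set

/-- Pasting lemma for two closed sets. -/
lemma continuousOn_union_closed {X L : Type*} [TopologicalSpace X] [TopologicalSpace L]
    {s t : Set X} {h : X → L} (hs : IsClosed s) (ht : IsClosed t)
    (h1 : ContinuousOn h s) (h2 : ContinuousOn h t) : ContinuousOn h (s ∪ t) := by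
  intro x hx
  have hws : ContinuousWithinAt h s x := by
    by_cases hxs : x ∈ s
    · exact h1 x hxs
    · exact continuousWithinAt_of_notMem_closure (by rwa [hs.closure_eq])
  have hwt : ContinuousWithinAt h t x := by
    by_cases hxt : x ∈ t
    · exact h2 x hxt
    · exact continuousWithinAt_of_notMem_closure (by rwa [ht.closure_eq])
  exact hws.union hwt


/-- Lemma 2.2 of the paper: if `L` is an ANE for compact Hausdorff spaces, `A ⊆ X` is closed,
and `Y = ⋃ Y_n` with `Y_n` closed and `L ∈ AE(Y_n)`, then every map `f : A → L` extends over
some open neighborhood of `A ∪ Y`. -/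
theorem extension_over_neighborhood {X L : Type*} [TopologicalSpace X] [CompactSpace X]
    [T2Space X] [TopologicalSpace L]
    (hANE : ∀ B : Set X, IsClosed B → ∀ g : X → L, ContinuousOn g B →
      ∃ (U : Set X) (h : X → L), IsOpen U ∧ B ⊆ U ∧ ContinuousOn h U ∧ Set.EqOn h g B)
    (A : Set X) (hA : IsClosed A) (Y : ℕ → Set X) (hY : ∀ n, IsClosed (Y n))
    (hAE : ∀ n, ∀ B : Set X, IsClosed B → B ⊆ Y n → ∀ g : X → L, ContinuousOn g B →
      ∃ g' : X → L, ContinuousOn g' (Y n) ∧ Set.EqOn g' g B)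
    (f : X → L) (hf : ContinuousOn f A) :
    ∃ (U : Set X) (g : X → L), IsOpen U ∧ A ∪ (⋃ n, Y n) ⊆ U ∧ ContinuousOn g U ∧
      Set.EqOn g f A := by
  classical
  -- the inductive step, made into a total statement so we can `choose`
  have hstep : ∀ (n : ℕ) (C : Set X) (g : X → L),
      ∃ q : Set X × (X → L) × Set X, IsClosed C → ContinuousOn g C →
        IsClosed q.1 ∧ IsOpen q.2.2 ∧ C ∪ Y n ⊆ q.2.2 ∧ q.2.2 ⊆ q.1 ∧
          ContinuousOn q.2.1 q.1 ∧ Set.EqOn q.2.1 g C := by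
    intro n C g
    by_cases H : IsClosed C ∧ ContinuousOn g C
    · obtain ⟨hC, hg⟩ := H
      -- extend g over Y n
      obtain ⟨g2, hg2, hg2eq⟩ := hAE n (C ∩ Y n) (hC.inter (hY n)) inter_subset_right g
        (hg.mono inter_subset_left)
      -- glue g and g2 on C ∪ Y n
      set h0 : X → L := fun x => if x ∈ C then g x else g2 x with hh0
      have h0C : Set.EqOn h0 g C := fun x hx => by simp [hh0, hx]
      have h0Y : Set.EqOn h0 g2 (Y n) := by
        intro x hx
        by_cases hxC : x ∈ C
        · simp only [hh0, if_pos hxC]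
          exact (hg2eq ⟨hxC, hx⟩).symm
        · simp [hh0, hxC]
      have hB : IsClosed (C ∪ Y n) := hC.union (hY n)
      have hh0cont : ContinuousOn h0 (C ∪ Y n) :=
        continuousOn_union_closed hC (hY n) (hg.congr h0C) (hg2.congr h0Y)
      obtain ⟨U, h, hU, hBU, hhcont, hheq⟩ := hANE (C ∪ Y n) hB h0 hh0cont
      -- shrink by normality
      obtain ⟨V, hV, hBV, hVU⟩ := normal_exists_closure_subset hB hU hBU
      refine ⟨⟨closure V, h, V⟩, fun _ _ => ?_⟩
      refine ⟨isClosed_closure, hV, hBV, subset_closure,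
        hhcont.mono hVU, fun x hx => ?_⟩
      exact (hheq (Or.inl hx)).trans (h0C hx)
    · exact ⟨⟨∅, g, ∅⟩, fun h1 h2 => absurd ⟨h1, h2⟩ H⟩
  choose F hF using hstep
  -- the recursive sequence of states (C n, g n, V n)
  set st : ℕ → Set X × (X → L) × Set X :=
    fun n => Nat.rec (A, f, (∅ : Set X)) (fun n p => F n p.1 p.2.1) n with hst
  set C : ℕ → Set X := fun n => (st n).1
  set g : ℕ → X → L := fun n => (st n).2.1
  set V : ℕ → Set X := fun n => (st n).2.2
  have hsucc : ∀ n, st (n + 1) = F n (C n) (g n) := fun n => rfl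
  have inv : ∀ n, IsClosed (C n) ∧ ContinuousOn (g n) (C n) := by
    intro n
    induction n with
    | zero => exact ⟨hA, hf⟩
    | succ n ih =>
      obtain ⟨h1, _, _, _, h2, _⟩ := hF n (C n) (g n) ih.1 ih.2
      exact ⟨h1, h2⟩
  have prop : ∀ n, IsOpen (V (n + 1)) ∧ C n ∪ Y n ⊆ V (n + 1) ∧ V (n + 1) ⊆ C (n + 1) ∧
      ContinuousOn (g (n + 1)) (C (n + 1)) ∧ Set.EqOn (g (n + 1)) (g n) (C n) := by
    intro n
    obtain ⟨_, h2, h3, h4, h5, h6⟩ := hF n (C n) (g n) (inv n).1 (inv n).2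
    exact ⟨h2, h3, h4, h5, h6⟩
  have hCmono : ∀ n, C n ⊆ C (n + 1) := fun n =>
    (subset_union_left.trans (prop n).2.1).trans (prop n).2.2.1
  have hCle : ∀ {m n}, m ≤ n → C m ⊆ C n := by
    intro m n hmn
    induction hmn with
    | refl => exact subset_rfl
    | step h ih => exact ih.trans (hCmono _)
  have hgle : ∀ {m n}, m ≤ n → Set.EqOn (g n) (g m) (C m) := by
    intro m n hmn
    induction hmn with
    | refl => exact fun x _ => rfl
    | @step k h ih => exact fun x hx => ((prop k).2.2.2.2 (hCle h hx)).trans (ih hx)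
  -- the final data
  refine ⟨⋃ n, V (n + 1),
    fun x => if hx : ∃ n, x ∈ C n then g (Nat.find hx) x else f x,
    isOpen_iUnion fun n => (prop n).1, ?_, ?_, ?_⟩
  · rintro x (hx | hx)
    · exact mem_iUnion.2 ⟨0, (prop 0).2.1 (Or.inl hx)⟩
    · obtain ⟨n, hn⟩ := mem_iUnion.1 hx
      exact mem_iUnion.2 ⟨n, (prop n).2.1 (Or.inr hn)⟩
  · -- continuity
    have key : ∀ n x, x ∈ C n →
        (if hx : ∃ m, x ∈ C m then g (Nat.find hx) x else f x) = g n x := by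
      intro n x hxn
      have hex : ∃ m, x ∈ C m := ⟨n, hxn⟩
      rw [dif_pos hex]
      exact (hgle (Nat.find_min' hex hxn) (Nat.find_spec hex)).symm
    intro x hx
    obtain ⟨n, hn⟩ := mem_iUnion.1 hx
    have hnhds : C (n + 1) ∈ nhds x := mem_nhds_iff.2 ⟨V (n + 1), (prop n).2.2.1, (prop n).1, hn⟩
    have hca : ContinuousAt (g (n + 1)) x := (prop n).2.2.2.1.continuousAt hnhds
    have : ContinuousAt (fun x => if hx : ∃ m, x ∈ C m then g (Nat.find hx) x else f x) x := by
      refine hca.congr (Filter.eventuallyEq_of_mem hnhds fun y hy => ?_)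
      exact (key (n + 1) y hy).symm
    exact this.continuousWithinAt
  · -- agrees with f on A
    intro x hx
    have hex : ∃ m, x ∈ C m := ⟨0, hx⟩
    show (if hx : ∃ n, x ∈ C n then g (Nat.find hx) x else f x) = f x
    rw [dif_pos hex]
    have : Nat.find hex = 0 := Nat.find_eq_zero hex |>.2 hx
    rw [this]
    rfl
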